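/- Let A ⊆ B be finite k-sparse graphs. Then A ≤_d B (i.e. δ(A) < δ(C) for every C with A ⊊ C ⊆ B) if and only if there exists a k-orientation B⁺ of B in which A is successor-d-closed, meaning A is successor-closed and every vertex of B⁺ all of whose reachable roots lie in A belongs to A. -/

import Mathlib

open scoped Classical

/-- Predimension `δ(B) = k|B| − #edges(B)` of a vertex subset. -/
noncomputable def delta {V : Type*} (k : ℕ) (Ed : Finset (Sym2 V)) (B : Finset V) : ℤ :=
  (k : ℤ) * B.card - (Ed.filter fun e => ∀ x ∈ e, x ∈ B).card

section Aux

variable {V : Type*} [Fintype V]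

lemma delta_eq (k : ℕ) (Ed : Finset (Sym2 V)) (B : Finset V) :
    delta k Ed B = (k : ℤ) * B.card - (Ed.filter fun e => ∀ x ∈ e, x ∈ B).card := by
  unfold delta; congr!

/-- Edges inside `C` are counted by their tails: each edge inside `C` has a unique tail. -/
lemma edges_card_eq_sum (Ed : Finset (Sym2 V))
    (S : V → V → Prop) (h1 : ∀ a b : V, s(a, b) ∈ Ed ↔ (S a b ∨ S b a))
    (h2 : ∀ a b : V, ¬ (S a b ∧ S b a)) (C : Finset V) :
    (Ed.filter fun e => ∀ x ∈ e, x ∈ C).card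
      = ∑ v ∈ C, (C.filter fun b => S v b).card := by
  classical
  rw [← Finset.card_sigma]
  symm
  apply Finset.card_bij (fun (p : (_ : V) × V) _ => s(p.1, p.2))
  · rintro ⟨a, b⟩ hp
    simp only [Finset.mem_sigma, Finset.mem_filter] at hp
    obtain ⟨ha, hb, hS⟩ := hp
    simp only [Finset.mem_filter]
    refine ⟨(h1 a b).2 (Or.inl hS), ?_⟩
    intro x hx
    rcases Sym2.mem_iff.1 hx with rfl | rfl
    · exact ha
    · exact hb
  · rintro ⟨a, b⟩ hp ⟨a', b'⟩ hp' heq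
    simp only [Finset.mem_sigma, Finset.mem_filter] at hp hp'
    simp only [Sym2.eq, Sym2.rel_iff', Prod.mk.injEq, Prod.swap_prod_mk] at heq
    rcases heq with ⟨rfl, rfl⟩ | ⟨h3, h4⟩
    · rfl
    · subst h3; subst h4
      exact absurd ⟨hp.2.2, hp'.2.2⟩ (h2 _ _)
  · intro e he
    simp only [Finset.mem_filter] at he
    induction e using Sym2.ind with
    | _ x y =>
      rcases (h1 x y).1 he.1 with hS | hS
      · refine ⟨⟨x, y⟩, ?_, rfl⟩
        simp only [Finset.mem_sigma, Finset.mem_filter]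
        exact ⟨he.2 x (by simp), he.2 y (by simp), hS⟩
      · refine ⟨⟨y, x⟩, ?_, Sym2.eq_swap⟩
        simp only [Finset.mem_sigma, Finset.mem_filter]
        exact ⟨he.2 y (by simp), he.2 x (by simp), hS⟩

lemma delta_diff (k : ℕ) (Ed : Finset (Sym2 V))
    (S : V → V → Prop) (h1 : ∀ a b : V, s(a, b) ∈ Ed ↔ (S a b ∨ S b a))
    (h2 : ∀ a b : V, ¬ (S a b ∧ S b a)) {A C : Finset V} (hAC : A ⊆ C)
    (hA : ∀ a ∈ A, ∀ b : V, S a b → b ∈ A) :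
    delta k Ed C - delta k Ed A
      = ∑ v ∈ C \ A, ((k : ℤ) - (C.filter fun b => S v b).card) := by
  classical
  have hedC := edges_card_eq_sum Ed S h1 h2 C
  have hedA := edges_card_eq_sum Ed S h1 h2 A
  have hsum : ∑ v ∈ A, (A.filter fun b => S v b).card
      = ∑ v ∈ A, (C.filter fun b => S v b).card := by
    refine Finset.sum_congr rfl fun v hv => ?_
    congr 1
    ext b
    simp only [Finset.mem_filter]
    constructor
    · rintro ⟨hb, hS⟩; exact ⟨hAC hb, hS⟩
    · rintro ⟨hb, hS⟩; exact ⟨hA v hv b hS, hS⟩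
  have h5 : ∑ v ∈ C \ A, (C.filter fun b => S v b).card
      + ∑ v ∈ A, (C.filter fun b => S v b).card
      = ∑ v ∈ C, (C.filter fun b => S v b).card := Finset.sum_sdiff hAC
  have h6 : (C \ A).card + A.card = C.card := Finset.card_sdiff_add_card_eq_card hAC
  rw [delta_eq, delta_eq, hedC, hedA, hsum, ← h5, ← h6]
  push_cast
  rw [Finset.sum_sub_distrib, Finset.sum_const, nsmul_eq_mul]
  ring

omit [Fintype V] in
lemma reach_mem {S : V → V → Prop} {A : Finset V}
    (h4 : ∀ a ∈ A, ∀ b : V, S a b → b ∈ A) {a r : V} (ha : a ∈ A)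
    (h : Relation.ReflTransGen S a r) : r ∈ A := by
  induction h with
  | refl => exact ha
  | tail _ step ih => exact h4 _ ih _ step

end Aux

/-- For finite `k`-sparse graphs `A ⊆ B`: `A ≤_d B` (δ(A) < δ(C) for all `A ⊊ C ⊆ B`)
iff there is a `k`-orientation of `B` in which `A` is successor-d-closed, i.e. `A` is
successor-closed and every vertex all of whose reachable roots lie among the roots
reachable from `A` belongs to `A`. -/
theorem dClosed_iff_orientation_sdclosed (k : ℕ) (V : Type*) [Fintype V]
    (Ed : Finset (Sym2 V)) (hEd : ∀ e ∈ Ed, ¬ e.IsDiag)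
    (hsparse : ∀ C : Finset V, (Ed.filter fun e => ∀ x ∈ e, x ∈ C).card ≤ k * C.card)
    (A : Finset V) :
    (∀ C : Finset V, A ⊆ C → A ≠ C → delta k Ed A < delta k Ed C) ↔
      (∃ S : V → V → Prop,
        (∀ a b : V, s(a, b) ∈ Ed ↔ (S a b ∨ S b a)) ∧
        (∀ a b : V, ¬ (S a b ∧ S b a)) ∧
        (∀ a : V, (Finset.univ.filter fun b => S a b).card ≤ k) ∧
        (∀ a ∈ A, ∀ b : V, S a b → b ∈ A) ∧
        (∀ v : V,
          (∀ r : V, (Finset.univ.filter fun b => S r b).card < k →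
            Relation.ReflTransGen S v r → ∃ a ∈ A, Relation.ReflTransGen S a r) →
          v ∈ A)) := by
  constructor
  · -- forward: d-closed ⇒ orientation
    intro hd
    classical
    set al : Sym2 V → Finset V :=
      fun e => Finset.univ.filter fun x => x ∈ e ∧ ((∀ y ∈ e, y ∈ A) ∨ x ∉ A) with hal
    set t : {e // e ∈ Ed} → Finset (V × Fin k) := fun e => (al e.1) ×ˢ Finset.univ with ht
    have hall : ∀ s : Finset {e // e ∈ Ed}, s.card ≤ (s.biUnion t).card := by
      intro s
      have hbU : s.biUnion t
          = (s.biUnion fun e => al e.1) ×ˢ (Finset.univ : Finset (Fin k)) := by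
        ext ⟨v, i⟩
        simp only [ht, Finset.mem_biUnion, Finset.mem_product, Finset.mem_univ, and_true]
      rw [hbU, Finset.card_product, Finset.card_univ, Fintype.card_fin]
      set W := s.biUnion fun e => al e.1 with hW
      set s₁ := s.filter fun e => ∀ x ∈ e.1, x ∈ A with hs₁
      set s₂ := s.filter fun e => ¬ ∀ x ∈ e.1, x ∈ A with hs₂
      have hsplit : s₁.card + s₂.card = s.card :=
        Finset.card_filter_add_card_filter_not _
      have hmemW : ∀ e ∈ s, ∀ x, x ∈ al e.1 → x ∈ W := by
        intro e he x hx; exact Finset.mem_biUnion.2 ⟨e, he, hx⟩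
      have hb1 : s₁.card ≤ k * (W ∩ A).card := by
        calc s₁.card ≤ (Ed.filter fun e => ∀ x ∈ e, x ∈ W ∩ A).card := by
              apply Finset.card_le_card_of_injOn (fun e => e.1)
              · intro e he
                simp only [hs₁, Finset.mem_coe, Finset.mem_filter] at he
                obtain ⟨hes, hins⟩ := he
                refine Finset.mem_filter.2 ⟨e.2, fun x hx =>
                  Finset.mem_inter.2 ⟨?_, hins x hx⟩⟩
                apply hmemW e hes
                simp only [hal, Finset.mem_filter]
                exact ⟨Finset.mem_univ _, hx, Or.inl hins⟩
              · intro e he e' he' h; exact Subtype.ext h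
          _ ≤ k * (W ∩ A).card := hsparse _
      have hb2 : s₂.card ≤ k * (W \ A).card := by
        have hsub : (Ed.filter fun e => ∀ x ∈ e, x ∈ A)
            ⊆ (Ed.filter fun e => ∀ x ∈ e, x ∈ A ∪ W) := by
          intro e he
          obtain ⟨he1, he2⟩ := Finset.mem_filter.1 he
          exact Finset.mem_filter.2 ⟨he1, fun x hx => Finset.mem_union_left _ (he2 x hx)⟩
        have hinj : s₂.card ≤ ((Ed.filter fun e => ∀ x ∈ e, x ∈ A ∪ W)
            \ (Ed.filter fun e => ∀ x ∈ e, x ∈ A)).card := by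
          apply Finset.card_le_card_of_injOn (fun e => e.1)
          · intro e he
            simp only [hs₂, Finset.mem_coe, Finset.mem_filter] at he
            obtain ⟨hes, hnin⟩ := he
            refine Finset.mem_sdiff.2 ⟨Finset.mem_filter.2 ⟨e.2, fun x hx => ?_⟩, ?_⟩
            · by_cases hxA : x ∈ A
              · exact Finset.mem_union_left _ hxA
              · refine Finset.mem_union_right _ (hmemW e hes x ?_)
                simp only [hal, Finset.mem_filter]
                exact ⟨Finset.mem_univ _, hx, Or.inr hxA⟩
            · intro hcon
              exact hnin ((Finset.mem_filter.1 hcon).2)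
          · intro e he e' he' h; exact Subtype.ext h
        have hcard : ((Ed.filter fun e => ∀ x ∈ e, x ∈ A ∪ W)
            \ (Ed.filter fun e => ∀ x ∈ e, x ∈ A)).card
            = (Ed.filter fun e => ∀ x ∈ e, x ∈ A ∪ W).card
              - (Ed.filter fun e => ∀ x ∈ e, x ∈ A).card := Finset.card_sdiff_of_subset hsub
        have hmono := Finset.card_le_card hsub
        have hAW : (Ed.filter fun e => ∀ x ∈ e, x ∈ A ∪ W).card
            ≤ (Ed.filter fun e => ∀ x ∈ e, x ∈ A).card + k * (W \ A).card := by
          by_cases hWA : A ∪ W = A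
          · rw [hWA]; exact Nat.le_add_right _ _
          · have hdd := hd (A ∪ W) Finset.subset_union_left (fun h => hWA h.symm)
            rw [delta_eq, delta_eq] at hdd
            have hsd : (A ∪ W) \ A = W \ A := by
              ext x
              simp only [Finset.mem_sdiff, Finset.mem_union]
              tauto
            have hcards : (A ∪ W).card = A.card + (W \ A).card := by
              have := Finset.card_sdiff_add_card_eq_card
                (Finset.subset_union_left : A ⊆ A ∪ W)
              rw [hsd] at this
              omega
            have hmul : (k : ℤ) * ((A ∪ W).card : ℤ)
                = (k : ℤ) * (A.card : ℤ) + ((k * (W \ A).card : ℕ) : ℤ) := by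
              rw [hcards]; push_cast; ring
            have hZ : ((Ed.filter fun e => ∀ x ∈ e, x ∈ A ∪ W).card : ℤ)
                ≤ ((Ed.filter fun e => ∀ x ∈ e, x ∈ A).card : ℤ)
                  + ((k * (W \ A).card : ℕ) : ℤ) := by linarith
            exact_mod_cast hZ
        omega
      have hWsplit : (W ∩ A).card + (W \ A).card = W.card :=
        Finset.card_inter_add_card_sdiff W A
      have hfin : k * (W ∩ A).card + k * (W \ A).card = W.card * k := by
        rw [← Nat.mul_add, hWsplit, Nat.mul_comm]
      linarith
    obtain ⟨f, hfinj, hft⟩ := (Finset.all_card_le_biUnion_card_iff_exists_injective t).1 hall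
    obtain ⟨S, hSdef⟩ : ∃ S : V → V → Prop, ∀ a b : V, S a b ↔
        ∃ h : s(a, b) ∈ Ed, (f ⟨s(a, b), h⟩).1 = a :=
      ⟨_, fun _ _ => Iff.rfl⟩
    have hfal : ∀ (e : Sym2 V) (h : e ∈ Ed), (f ⟨e, h⟩).1 ∈ al e := by
      intro e h
      have := hft ⟨e, h⟩
      rw [ht] at this
      exact (Finset.mem_product.1 this).1
    have h1' : ∀ a b : V, s(a, b) ∈ Ed ↔ (S a b ∨ S b a) := by
      intro a b
      constructor
      · intro h
        have hm := hfal _ h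
        simp only [hal, Finset.mem_filter] at hm
        rcases Sym2.mem_iff.1 hm.2.1 with hfa | hfb
        · exact Or.inl ((hSdef a b).2 ⟨h, hfa⟩)
        · right
          have h' : s(b, a) ∈ Ed := by rw [Sym2.eq_swap]; exact h
          have hsub : (⟨s(b, a), h'⟩ : {e // e ∈ Ed}) = ⟨s(a, b), h⟩ :=
            Subtype.ext Sym2.eq_swap
          have hfe := congrArg (fun e : {e // e ∈ Ed} => (f e).1) hsub
          exact (hSdef b a).2 ⟨h', hfe.trans hfb⟩
      · rintro (hab | hba)
        · exact ((hSdef a b).1 hab).1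
        · rw [Sym2.eq_swap]; exact ((hSdef b a).1 hba).1
    have h2' : ∀ a b : V, ¬ (S a b ∧ S b a) := by
      rintro a b ⟨hab1, hab2⟩
      obtain ⟨h, hfa⟩ := (hSdef a b).1 hab1
      obtain ⟨h', hfb⟩ := (hSdef b a).1 hab2
      have hsub : (⟨s(b, a), h'⟩ : {e // e ∈ Ed}) = ⟨s(a, b), h⟩ :=
        Subtype.ext Sym2.eq_swap
      have hfe := congrArg (fun e : {e // e ∈ Ed} => (f e).1) hsub
      have hab : a = b := hfa.symm.trans (hfe.symm.trans hfb)
      exact hEd _ h (by rw [hab]; exact Sym2.mk_isDiag_iff.2 rfl)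
    have h3' : ∀ a : V, (Finset.univ.filter fun b => S a b).card ≤ k := by
      intro a
      rcases Nat.eq_zero_or_pos k with hk0 | hk
      · have hemp : (Finset.univ.filter fun b => S a b) = ∅ := by
          apply Finset.eq_empty_of_forall_notMem
          intro b hb
          obtain ⟨h, -⟩ := (hSdef a b).1 (Finset.mem_filter.1 hb).2
          have := (f ⟨s(a, b), h⟩).2
          rw [hk0] at this
          exact this.elim0
        rw [hemp]; simp
      · haveI : Nonempty (Fin k) := ⟨⟨0, hk⟩⟩
        have hinj2 : Set.InjOn
            (fun b => if h : s(a, b) ∈ Ed then (f ⟨s(a, b), h⟩).2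
              else Classical.arbitrary (Fin k))
            ↑(Finset.univ.filter fun b => S a b) := by
          intro b hb b' hb' heq
          simp only [Finset.coe_filter, Set.mem_setOf_eq] at hb hb'
          obtain ⟨h, hfa⟩ := (hSdef a b).1 hb.2
          obtain ⟨h', hfa'⟩ := (hSdef a b').1 hb'.2
          simp only at heq
          rw [dif_pos h, dif_pos h'] at heq
          have hfeq : f ⟨s(a, b), h⟩ = f ⟨s(a, b'), h'⟩ :=
            Prod.ext (hfa.trans hfa'.symm) heq
          have hee : s(a, b) = s(a, b') := congrArg Subtype.val (hfinj hfeq)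
          simp only [Sym2.eq, Sym2.rel_iff', Prod.mk.injEq, Prod.swap_prod_mk] at hee
          rcases hee with ⟨-, rfl⟩ | ⟨h1e, h2e⟩
          · rfl
          · exact h2e.trans h1e
        have hle := Finset.card_le_card_of_injOn _ (fun b _ => Finset.mem_univ _) hinj2
        simpa using hle
    have h4' : ∀ a ∈ A, ∀ b : V, S a b → b ∈ A := by
      intro a ha b hSab
      obtain ⟨h, hfa⟩ := (hSdef a b).1 hSab
      have hm := hfal _ h
      simp only [hal, Finset.mem_filter] at hm
      rcases hm.2.2 with hin | hout
      · exact hin b (Sym2.mem_iff.2 (Or.inr rfl))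
      · rw [hfa] at hout
        exact absurd ha hout
    refine ⟨S, h1', h2', h3', h4', ?_⟩
    · intro v hv
      set D := Finset.univ.filter fun w => ∀ r : V,
        (Finset.univ.filter fun b => S r b).card < k →
          Relation.ReflTransGen S w r → r ∈ A with hD
      have hAr : ∀ a ∈ A, ∀ r, Relation.ReflTransGen S a r → r ∈ A :=
        fun a ha r hr => reach_mem h4' ha hr
      have hvD : v ∈ D := Finset.mem_filter.2 ⟨Finset.mem_univ _, fun r hr hre => by
        obtain ⟨a, ha, har⟩ := hv r hr hre
        exact hAr a ha r har⟩
      have hAD : A ⊆ D := fun a ha =>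
        Finset.mem_filter.2 ⟨Finset.mem_univ _, fun r _ hre => hAr a ha r hre⟩
      have hDsucc : ∀ d ∈ D, ∀ b, S d b → b ∈ D := by
        intro d hd' b hSdb
        have hdp := (Finset.mem_filter.1 hd').2
        exact Finset.mem_filter.2 ⟨Finset.mem_univ _,
          fun r hr hre => hdp r hr (Relation.ReflTransGen.head hSdb hre)⟩
      have hdiff := delta_diff k Ed S h1' h2' hAD h4'
      have hzero : ∀ w ∈ D \ A,
          ((k : ℤ) - ((D.filter fun b => S w b).card : ℤ)) = 0 := by
        intro w hw
        obtain ⟨hwD, hwA⟩ := Finset.mem_sdiff.1 hw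
        have heqf : (D.filter fun b => S w b) = (Finset.univ.filter fun b => S w b) := by
          apply Finset.Subset.antisymm
            (Finset.filter_subset_filter _ (Finset.subset_univ _))
          intro b hb
          have hSwb := (Finset.mem_filter.1 hb).2
          exact Finset.mem_filter.2 ⟨hDsucc w hwD b hSwb, hSwb⟩
        rw [heqf]
        have hk1 : ¬ (Finset.univ.filter fun b => S w b).card < k := by
          intro hlt
          exact hwA ((Finset.mem_filter.1 hwD).2 w hlt Relation.ReflTransGen.refl)
        have hk2 := h3' w
        omega
      have hsum0 : delta k Ed D - delta k Ed A = 0 := by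
        rw [hdiff]; exact Finset.sum_eq_zero hzero
      by_cases hADeq : A = D
      · rw [hADeq]; exact hvD
      · exfalso
        have := hd D hAD hADeq
        omega
  · -- backward: orientation ⇒ d-closed
    rintro ⟨S, h1, h2, h3, h5, h6⟩ C hAC hne
    have hdiff := delta_diff k Ed S h1 h2 hAC h5
    have hpos : 0 < ∑ v ∈ C \ A, ((k : ℤ) - ((C.filter fun b => S v b).card : ℤ)) := by
      apply Finset.sum_pos'
      · intro v _
        have hle : (C.filter fun b => S v b).card ≤ k :=
          le_trans (Finset.card_le_card
            (Finset.filter_subset_filter _ (Finset.subset_univ C))) (h3 v)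
        omega
      · by_contra hcon
        push_neg at hcon
        have hfull : ∀ v ∈ C \ A,
            (Finset.univ.filter fun b => S v b) = (C.filter fun b => S v b) := by
          intro v hv
          have hsub : (C.filter fun b => S v b) ⊆ (Finset.univ.filter fun b => S v b) :=
            Finset.filter_subset_filter _ (Finset.subset_univ C)
          refine (Finset.eq_of_subset_of_card_le hsub ?_).symm
          have hc := hcon v hv
          have hk := h3 v
          omega
        obtain ⟨v₀, hv₀C, hv₀A⟩ := Finset.exists_of_ssubset (hAC.ssubset_of_ne hne)
        have hv₀ : v₀ ∈ C \ A := Finset.mem_sdiff.2 ⟨hv₀C, hv₀A⟩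
        have hreach : ∀ w, Relation.ReflTransGen S v₀ w → w ∈ C := by
          intro w hw
          induction hw with
          | refl => exact hv₀C
          | @tail m w h' step ih =>
            by_cases hmA : m ∈ A
            · exact hAC (h5 m hmA w step)
            · have hm : m ∈ C \ A := Finset.mem_sdiff.2 ⟨ih, hmA⟩
              have hw' : w ∈ C.filter fun b => S m b := by
                rw [← hfull m hm]
                exact Finset.mem_filter.2 ⟨Finset.mem_univ _, step⟩
              exact (Finset.mem_filter.1 hw').1
        apply hv₀A
        apply h6 v₀
        intro r hr hre
        have hrC := hreach r hre
        by_cases hrA : r ∈ A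
        · exact ⟨r, hrA, Relation.ReflTransGen.refl⟩
        · exfalso
          have hrCA : r ∈ C \ A := Finset.mem_sdiff.2 ⟨hrC, hrA⟩
          have := hcon r hrCA
          rw [hfull r hrCA] at hr
          omega
    linarith
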